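/- arXiv:2103.05907 — 2 statements merged into one kernel-verified Lean document; each statement's English description precedes it below -/
import Mathlib

section
/- Let K ⊂ ℝⁿ be a strictly convex, smooth, compact set with 0 in its interior, and let F_K(x) = −ln(1 − ‖x‖_K) − ‖x‖_K on {x : ‖x‖_K < 1}. Then for every x with 0 < ‖x‖_K < 1 and every d ∈ ℝⁿ \ {0}: ∇F_K(x) = (‖x‖_K/(1 − ‖x‖_K))·∇‖·‖_K(x); the Fenchel conjugate satisfies F_K*(d) = ‖d‖_{K°} − ln(1 + ‖d‖_{K°}) for all d ∈ ℝⁿ; and ∇F_K*(d) = (‖d‖_{K°}/(1 + ‖d‖_{K°}))·∇‖·‖_{K°}(d). Moreover F_K is differentiable on the interior of K and F_K* is differentiable on all of ℝⁿ. -/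
open scoped InnerProductSpace
open scoped Pointwise
open MeasureTheory Topology Filter

noncomputable section

abbrev Euc (n : ℕ) := EuclideanSpace ℝ (Fin n)

/-- The polar set `K° = {d | ⟪d, x⟫ ≤ 1 for all x ∈ K}`. -/
def polarSet {n : ℕ} (K : Set (Euc n)) : Set (Euc n) := {d | ∀ x ∈ K, ⟪d, x⟫_ℝ ≤ 1}

/-- The normal cone of `K` at `y`. -/
def normalCone {n : ℕ} (K : Set (Euc n)) (y : Euc n) : Set (Euc n) :=
  {d | ∀ x ∈ K, 0 ≤ ⟪d, y - x⟫_ℝ}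

/-- A set is smooth if at each boundary point there is exactly one normal direction in `∂K°`. -/
def SmoothSet {n : ℕ} (K : Set (Euc n)) : Prop :=
  ∀ x ∈ frontier K, ∃! d, d ∈ normalCone K x ∩ frontier (polarSet K)

/-- A set is strictly convex if the midpoint of two distinct boundary points is interior. -/
def StrictlyConvexSet {n : ℕ} (K : Set (Euc n)) : Prop :=
  ∀ x₁ ∈ frontier K, ∀ x₂ ∈ frontier K, x₁ ≠ x₂ → midpoint ℝ x₁ x₂ ∈ interior K

/-- `(α, q)`-uniform convexity of a set w.r.t. its gauge. -/
def UniformlyConvexSet {n : ℕ} (K : Set (Euc n)) (α q : ℝ) : Prop :=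
  ∀ x ∈ K, ∀ y ∈ K, ∀ z ∈ K, ∀ γ ∈ Set.Icc (0:ℝ) 1,
    γ • x + (1 - γ) • y + (α / q * (γ * (1 - γ)) * gauge K (x - y) ^ q) • z ∈ K

/-- The barrier function `F_K(x) = -ln(1 - ‖x‖_K) - ‖x‖_K`. -/
def FK {n : ℕ} (K : Set (Euc n)) (x : Euc n) : ℝ := -Real.log (1 - gauge K x) - gauge K x

/-- Fenchel conjugate of the barrier `F_K` (defined on `D_K = {‖x‖_K < 1}`). -/
def FstarK {n : ℕ} (K : Set (Euc n)) (d : Euc n) : ℝ :=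
  sSup ((fun x => ⟪x, d⟫_ℝ - FK K x) '' {x | gauge K x < 1})

/-- Bregman divergence `D_F(u, v) = F(u) - F(v) - ⟪∇F(v), u - v⟫`. -/
def breg {n : ℕ} (F : Euc n → ℝ) (u v : Euc n) : ℝ :=
  F u - F v - ⟪gradient F v, u - v⟫_ℝ

def l1Ball {n : ℕ} (r : ℝ) : Set (Euc n) := {x | ∑ i, |x i| ≤ r}
def linfBall {n : ℕ} (R : ℝ) : Set (Euc n) := {x | ∀ i, |x i| ≤ R}
def l2Ball {n : ℕ} (r : ℝ) : Set (Euc n) := Metric.closedBall 0 r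
def lqBall {n : ℕ} (q r : ℝ) : Set (Euc n) := {x | ∑ i, |x i| ^ q ≤ r ^ q}

/-! ### Auxiliary lemmas -/

section Aux

variable {n : ℕ} {K : Set (Euc n)}

lemma polar_isClosed : IsClosed (polarSet K) := by
  have : polarSet K = ⋂ x ∈ K, {d : Euc n | ⟪d, x⟫_ℝ ≤ 1} := by
    ext d; simp [polarSet]
  rw [this]
  exact isClosed_biInter fun x _ =>
    isClosed_le (Continuous.inner continuous_id continuous_const) continuous_const

lemma polar_mem_nhds (hKcomp : IsCompact K) : polarSet K ∈ 𝓝 (0 : Euc n) := by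
  obtain ⟨R, hR0, hKR⟩ := hKcomp.isBounded.subset_closedBall_lt 0 0
  refine Filter.mem_of_superset
    (Metric.closedBall_mem_nhds 0 (by positivity : (0:ℝ) < R⁻¹)) ?_
  intro d hd x hx
  have h1 : ‖d‖ ≤ R⁻¹ := by simpa [dist_zero_right] using hd
  have h2 : ‖x‖ ≤ R := by simpa [dist_zero_right] using hKR hx
  calc ⟪d, x⟫_ℝ ≤ ‖d‖ * ‖x‖ := real_inner_le_norm _ _
    _ ≤ R⁻¹ * R := mul_le_mul h1 h2 (norm_nonneg _) (by positivity)
    _ = 1 := by field_simp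

lemma polar_isCompact (h0 : (0 : Euc n) ∈ interior K) : IsCompact (polarSet K) := by
  obtain ⟨ε, hε, hball⟩ := Metric.mem_nhds_iff.mp (mem_interior_iff_mem_nhds.mp h0)
  refine Metric.isCompact_of_isClosed_isBounded polar_isClosed ?_
  rw [isBounded_iff_forall_norm_le]
  refine ⟨2/ε, fun d hd => ?_⟩
  by_contra h
  push_neg at h
  have hd0 : d ≠ 0 := by
    intro h'
    rw [h', norm_zero] at h
    have : (0:ℝ) < 2/ε := by positivity
    linarith
  have hdn : (0:ℝ) < ‖d‖ := norm_pos_iff.mpr hd0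
  set x : Euc n := (ε/2) • ‖d‖⁻¹ • d with hx
  have hxK : x ∈ K := by
    apply hball
    rw [Metric.mem_ball, dist_zero_right, hx]
    rw [norm_smul, norm_smul, norm_inv, norm_norm]
    rw [Real.norm_eq_abs, abs_of_pos (by positivity : (0:ℝ) < ε/2)]
    rw [inv_mul_cancel₀ hdn.ne']
    simp only [mul_one]
    linarith
  have hle := hd x hxK
  rw [hx, real_inner_smul_right, real_inner_smul_right,
    real_inner_self_eq_norm_sq] at hle
  have : ⟪d, d⟫_ℝ = ‖d‖^2 := real_inner_self_eq_norm_sq d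
  have h2 : ε/2 * (‖d‖⁻¹ * ‖d‖^2) = ε/2 * ‖d‖ := by
    field_simp
  rw [h2] at hle
  have h3 : ε/2 * (2/ε) < ε/2 * ‖d‖ :=
    mul_lt_mul_of_pos_left h (by positivity : (0:ℝ) < ε/2)
  have h4 : ε/2 * (2/ε) = 1 := by field_simp
  linarith

lemma isGreatest_inner_polar (hKcomp : IsCompact K) (h0 : (0 : Euc n) ∈ interior K)
    (d : Euc n) :
    IsGreatest ((fun x => ⟪x, d⟫_ℝ) '' K) (gauge (polarSet K) d) := by
  have h0K : (0 : Euc n) ∈ K := interior_subset h0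
  obtain ⟨x₀, hx₀K, hx₀max⟩ := hKcomp.exists_isMaxOn (f := fun x : Euc n => ⟪x, d⟫_ℝ)
    ⟨0, h0K⟩ ((continuous_id.inner continuous_const).continuousOn)
  have hmax : ∀ x ∈ K, ⟪x, d⟫_ℝ ≤ ⟪x₀, d⟫_ℝ := fun x hx => hx₀max hx
  set m := ⟪x₀, d⟫_ℝ with hm
  have hm0 : 0 ≤ m := by simpa using hmax 0 h0K
  have hgm : gauge (polarSet K) d = m := by
    rcases eq_or_lt_of_le hm0 with h|h
    · have hd0 : d = 0 := by
        by_contra hd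
        obtain ⟨ε, hε, hball⟩ := Metric.mem_nhds_iff.mp (mem_interior_iff_mem_nhds.mp h0)
        have hdn : (0:ℝ) < ‖d‖ := norm_pos_iff.mpr hd
        have hxK : (ε/2) • ‖d‖⁻¹ • d ∈ K := by
          apply hball
          rw [Metric.mem_ball, dist_zero_right, norm_smul, norm_smul, norm_inv, norm_norm]
          rw [Real.norm_eq_abs, abs_of_pos (by positivity : (0:ℝ) < ε/2),
            inv_mul_cancel₀ hdn.ne']
          simp only [mul_one]; linarith
        have hle := hmax _ hxK
        rw [real_inner_smul_left, real_inner_smul_left, real_inner_self_eq_norm_sq] at hle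
        have h2 : ‖d‖⁻¹ * ‖d‖^2 = ‖d‖ := by field_simp
        rw [h2] at hle
        nlinarith
      subst hd0
      simp [gauge_zero, ← h]
    · apply le_antisymm
      · refine gauge_le_of_mem h.le ?_
        refine ⟨m⁻¹ • d, ?_, ?_⟩
        swap
        · show m • m⁻¹ • d = d
          rw [smul_smul, mul_inv_cancel₀ h.ne', one_smul]
        intro x hx
        rw [real_inner_smul_left, real_inner_comm]
        calc m⁻¹ * ⟪x, d⟫_ℝ ≤ m⁻¹ * m :=
          mul_le_mul_of_nonneg_left (hmax x hx) (by positivity)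
        _ = 1 := inv_mul_cancel₀ h.ne'
      · by_contra hlt
        push_neg at hlt
        obtain ⟨b, hb0, hbm, hdb⟩ := exists_lt_of_gauge_lt
          (absorbent_nhds_zero (polar_mem_nhds hKcomp)) hlt
        obtain ⟨e, heP, hbe⟩ := hdb
        have h1 : ⟪e, x₀⟫_ℝ ≤ 1 := heP x₀ hx₀K
        have h2 : m = b * ⟪e, x₀⟫_ℝ := by
          rw [hm, ← hbe, real_inner_comm, real_inner_smul_left, real_inner_comm]
        nlinarith
  constructor
  · exact ⟨x₀, hx₀K, hgm.symm⟩
  · rintro y ⟨x, hx, rfl⟩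
    rw [hgm]
    exact hmax x hx

lemma isGreatest_inner_bipolar (hKcomp : IsCompact K) (hKconv : Convex ℝ K)
    (h0 : (0 : Euc n) ∈ interior K) (x : Euc n) :
    IsGreatest ((fun d => ⟪d, x⟫_ℝ) '' polarSet K) (gauge K x) := by
  have hKnhds : K ∈ 𝓝 (0 : Euc n) := mem_interior_iff_mem_nhds.mp h0
  have h0K : (0 : Euc n) ∈ K := interior_subset h0
  have h0P : (0 : Euc n) ∈ polarSet K := fun y _ => by simp
  have hub : ∀ d ∈ polarSet K, ⟪d, x⟫_ℝ ≤ gauge K x := by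
    intro d hd
    by_contra hlt
    push_neg at hlt
    obtain ⟨b, hb0, hba, hxb⟩ := exists_lt_of_gauge_lt (absorbent_nhds_zero hKnhds) hlt
    obtain ⟨y, hyK, hby⟩ := hxb
    have h1 : ⟪d, x⟫_ℝ = b * ⟪d, y⟫_ℝ := by rw [← hby, real_inner_smul_right]
    have h2 := hd y hyK
    nlinarith
  obtain ⟨d₀, hd₀P, hd₀max⟩ := (polar_isCompact h0).exists_isMaxOn
    (f := fun e : Euc n => ⟪e, x⟫_ℝ) ⟨0, h0P⟩
    ((continuous_id.inner continuous_const).continuousOn)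
  have hd₀m : ∀ e ∈ polarSet K, ⟪e, x⟫_ℝ ≤ ⟪d₀, x⟫_ℝ := fun e he => hd₀max he
  set m := ⟪d₀, x⟫_ℝ with hm
  suffices hsuff : gauge K x ≤ m by
    have heq : m = gauge K x := le_antisymm (hub d₀ hd₀P) hsuff
    constructor
    · exact ⟨d₀, hd₀P, heq⟩
    · rintro y ⟨e, he, rfl⟩
      exact hub e he
  by_contra hlt
  push_neg at hlt
  have hm0 : 0 ≤ m := by simpa using hd₀m 0 h0P
  set t := (m + gauge K x)/2 with htdef
  have ht0 : 0 < t := by simp only [htdef]; linarith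
  have htm : m < t := by simp only [htdef]; linarith
  have htg : t < gauge K x := by simp only [htdef]; linarith
  have hxt : x ∉ t • K := fun hmem =>
    absurd (gauge_le_of_mem ht0.le hmem) (not_le.mpr htg)
  have hcl : IsClosed (t • K) := (IsCompact.smul t hKcomp).isClosed
  have hcv : Convex ℝ (t • K) := hKconv.smul t
  obtain ⟨f, u, hfu, hux⟩ := geometric_hahn_banach_closed_point hcv hcl hxt
  have h0t : (0 : Euc n) ∈ t • K := ⟨0, h0K, smul_zero t⟩
  have hu0 : 0 < u := by simpa using hfu 0 h0t
  set v := (InnerProductSpace.toDual ℝ (Euc n)).symm f with hv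
  have hvf : ∀ y, ⟪v, y⟫_ℝ = f y := fun y => InnerProductSpace.toDual_symm_apply
  have hdP : (t/u) • v ∈ polarSet K := by
    intro y hyK
    rw [real_inner_smul_left, hvf]
    have h1 : f (t • y) < u := hfu _ ⟨y, hyK, rfl⟩
    rw [f.map_smul, smul_eq_mul] at h1
    rw [div_mul_eq_mul_div, div_le_one hu0]
    linarith
  have h2 := hd₀m _ hdP
  rw [real_inner_smul_left, hvf] at h2
  have h3 : t < t/u * f x := by
    rw [div_mul_eq_mul_div, lt_div_iff₀ hu0]
    nlinarith
  linarith

/-- Danskin-type theorem: the max of linear functions over a compact set is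
differentiable at points with a unique maximizer. -/
lemma danskin {D : Set (Euc n)} (hD : IsCompact D) {M : Euc n → ℝ}
    (hM : ∀ x, IsGreatest ((fun d => ⟪d, x⟫_ℝ) '' D) (M x))
    {x₀ d₀ : Euc n} (hd₀ : d₀ ∈ D) (hmax : ⟪d₀, x₀⟫_ℝ = M x₀)
    (huniq : ∀ d ∈ D, ⟪d, x₀⟫_ℝ = M x₀ → d = d₀) :
    HasGradientAt M d₀ x₀ := by
  obtain ⟨C, hC0, hC⟩ : ∃ C > 0, ∀ d ∈ D, ‖d‖ ≤ C := by
    obtain ⟨C, hC⟩ := isBounded_iff_forall_norm_le.mp hD.isBounded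
    exact ⟨max C 1, lt_of_lt_of_le one_pos (le_max_right _ _),
      fun d hd => (hC d hd).trans (le_max_left _ _)⟩
  rw [hasGradientAt_iff_hasFDerivAt, hasFDerivAt_iff_isLittleO,
    Asymptotics.isLittleO_iff]
  intro c hc
  set A := D ∩ {d : Euc n | c ≤ dist d d₀} with hA
  have hAcomp : IsCompact A := hD.inter_right
    (isClosed_le continuous_const (continuous_id.dist continuous_const))
  obtain ⟨δ, hδ0, hδ⟩ : ∃ δ > 0, ∀ d ∈ A, 2 * C * δ ≤ M x₀ - ⟪d, x₀⟫_ℝ := by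
    rcases A.eq_empty_or_nonempty with hAe|hAne
    · exact ⟨1, one_pos, by simp [hAe]⟩
    · obtain ⟨a, haA, hamin⟩ := hAcomp.exists_isMaxOn (f := fun e : Euc n => ⟪e, x₀⟫_ℝ)
        hAne ((continuous_id.inner continuous_const).continuousOn)
      have hamin' : ∀ e ∈ A, ⟪e, x₀⟫_ℝ ≤ ⟪a, x₀⟫_ℝ := fun e he => hamin he
      have hle : ⟪a, x₀⟫_ℝ ≤ M x₀ := (hM x₀).2 ⟨a, haA.1, rfl⟩
      have hpos : 0 < M x₀ - ⟪a, x₀⟫_ℝ := by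
        rcases eq_or_lt_of_le hle with heq|hlt
        · exfalso
          have := huniq a haA.1 heq
          have hdist := haA.2
          rw [this] at hdist
          simp only [Set.mem_setOf_eq, dist_self] at hdist
          linarith
        · linarith
      refine ⟨(M x₀ - ⟪a, x₀⟫_ℝ)/(2*C), by positivity, fun e heA => ?_⟩
      have h1 := hamin' e heA
      have h2 : 2*C*((M x₀ - ⟪a, x₀⟫_ℝ)/(2*C)) = M x₀ - ⟪a, x₀⟫_ℝ := by
        field_simp
      rw [h2]
      linarith
  rw [Metric.eventually_nhds_iff]
  refine ⟨δ, hδ0, fun x hx => ?_⟩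
  have hnorm : ‖x - x₀‖ < δ := by rwa [← dist_eq_norm]
  obtain ⟨dx, hdxD, hdxval⟩ := (hM x).1
  have h1 : ⟪d₀, x⟫_ℝ ≤ M x := (hM x).2 ⟨d₀, hd₀, rfl⟩
  have htd : (InnerProductSpace.toDual ℝ (Euc n) d₀) (x - x₀)
      = ⟪d₀, x⟫_ℝ - ⟪d₀, x₀⟫_ℝ := by
    rw [InnerProductSpace.toDual_apply_apply, inner_sub_right]
  have hE0 : 0 ≤ M x - M x₀ - (InnerProductSpace.toDual ℝ (Euc n) d₀) (x - x₀) := by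
    rw [htd]; linarith
  have hdxn : dist dx d₀ < c := by
    by_contra hfar
    push_neg at hfar
    have hdxA : dx ∈ A := ⟨hdxD, hfar⟩
    have hkey := hδ dx hdxA
    have e1 : ⟪dx, x⟫_ℝ - ⟪dx, x₀⟫_ℝ = ⟪dx, x - x₀⟫_ℝ := by
      rw [inner_sub_right]
    have e2 : ⟪dx, x - x₀⟫_ℝ ≤ C * ‖x - x₀‖ := by
      calc ⟪dx, x - x₀⟫_ℝ ≤ ‖dx‖ * ‖x - x₀‖ := real_inner_le_norm _ _
        _ ≤ C * ‖x - x₀‖ := mul_le_mul_of_nonneg_right (hC dx hdxD) (norm_nonneg _)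
    have e3 : -(C * ‖x - x₀‖) ≤ ⟪d₀, x - x₀⟫_ℝ := by
      have h := abs_real_inner_le_norm d₀ (x - x₀)
      have h' : ‖d₀‖ * ‖x - x₀‖ ≤ C * ‖x - x₀‖ :=
        mul_le_mul_of_nonneg_right (hC d₀ hd₀) (norm_nonneg _)
      cases abs_le.mp h with
      | intro hl hr => linarith
    have e4 : ⟪d₀, x⟫_ℝ - ⟪d₀, x₀⟫_ℝ = ⟪d₀, x - x₀⟫_ℝ := by
      rw [inner_sub_right]
    -- M x ≥ ⟪d₀, x⟫ ≥ M x₀ - C‖x-x₀‖ and ⟪dx,x₀⟫ ≥ M x - C‖x-x₀‖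
    have e5 : M x₀ - ⟪dx, x₀⟫_ℝ ≤ 2 * C * ‖x - x₀‖ := by
      have := hdxval  -- ⟪dx, x⟫ = M x
      nlinarith
    nlinarith
  rw [Real.norm_eq_abs, abs_of_nonneg hE0, htd]
  have h2 : ⟪dx, x₀⟫_ℝ ≤ M x₀ := (hM x₀).2 ⟨dx, hdxD, rfl⟩
  have h3 : ⟪dx - d₀, x - x₀⟫_ℝ ≤ ‖dx - d₀‖ * ‖x - x₀‖ := real_inner_le_norm _ _
  have h4 : ‖dx - d₀‖ ≤ c := by rw [← dist_eq_norm]; exact hdxn.le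
  have h5 : ⟪dx - d₀, x - x₀⟫_ℝ
      = ⟪dx, x⟫_ℝ - ⟪dx, x₀⟫_ℝ - ⟪d₀, x⟫_ℝ + ⟪d₀, x₀⟫_ℝ := by
    rw [inner_sub_left, inner_sub_right, inner_sub_right]; ring
  have h6 : ‖dx - d₀‖ * ‖x - x₀‖ ≤ c * ‖x - x₀‖ :=
    mul_le_mul_of_nonneg_right h4 (norm_nonneg _)
  have h7 := hdxval
  nlinarith

lemma exists_hasGradientAt_gauge (hKcomp : IsCompact K) (hKconv : Convex ℝ K)
    (h0 : (0 : Euc n) ∈ interior K) (hsmooth : SmoothSet K)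
    {x : Euc n} (hx : x ≠ 0) :
    ∃ d₀ ∈ polarSet K, ⟪d₀, x⟫_ℝ = gauge K x ∧ HasGradientAt (gauge K) d₀ x := by
  have hKnhds : K ∈ 𝓝 (0 : Euc n) := mem_interior_iff_mem_nhds.mp h0
  have ht : 0 < gauge K x :=
    (gauge_pos (absorbent_nhds_zero hKnhds)
      ((NormedSpace.isVonNBounded_iff ℝ).mpr hKcomp.isBounded)).mpr hx
  set t := gauge K x with htdef
  set xh := t⁻¹ • x with hxhdef
  have hgxh : gauge K xh = 1 := by
    rw [hxhdef, gauge_smul_of_nonneg (inv_nonneg.mpr ht.le), smul_eq_mul, ← htdef,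
      inv_mul_cancel₀ ht.ne']
  have hxhf : xh ∈ frontier K := (gauge_eq_one_iff_mem_frontier hKconv hKnhds).mp hgxh
  obtain ⟨dstar, _, hduniq⟩ := hsmooth xh hxhf
  obtain ⟨d₀, hd₀P, hd₀val⟩ := (isGreatest_inner_bipolar hKcomp hKconv h0 x).1
  have hclaim : ∀ d ∈ polarSet K, ⟪d, x⟫_ℝ = gauge K x →
      d ∈ normalCone K xh ∩ frontier (polarSet K) := by
    intro d hdP hdval
    have hdxh : ⟪d, xh⟫_ℝ = 1 := by
      rw [hxhdef, real_inner_smul_right, hdval, ← htdef, inv_mul_cancel₀ ht.ne']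
    constructor
    · intro y hyK
      rw [inner_sub_right, hdxh]
      linarith [hdP y hyK]
    · rw [polar_isClosed.frontier_eq]
      refine ⟨hdP, fun hint => ?_⟩
      have hlt1 : gauge (polarSet K) d < 1 := interior_subset_gauge_lt_one _ hint
      obtain ⟨b, hb0, hb1, hdb⟩ := exists_lt_of_gauge_lt
        (absorbent_nhds_zero (polar_mem_nhds hKcomp)) hlt1
      obtain ⟨e, heP, hbe⟩ := hdb
      have h1 : ⟪e, xh⟫_ℝ ≤ gauge K xh :=
        (isGreatest_inner_bipolar hKcomp hKconv h0 xh).2 ⟨e, heP, rfl⟩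
      rw [hgxh] at h1
      have h2 : ⟪d, xh⟫_ℝ = b * ⟪e, xh⟫_ℝ := by rw [← hbe, real_inner_smul_left]
      nlinarith
  have huniq : ∀ d ∈ polarSet K, ⟪d, x⟫_ℝ = gauge K x → d = d₀ := by
    intro d hd hval
    rw [hduniq d (hclaim d hd hval), hduniq d₀ (hclaim d₀ hd₀P hd₀val)]
  exact ⟨d₀, hd₀P, hd₀val,
    danskin (polar_isCompact h0) (isGreatest_inner_bipolar hKcomp hKconv h0)
      hd₀P hd₀val huniq⟩

lemma exists_hasGradientAt_gauge_polar (hKcomp : IsCompact K)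
    (h0 : (0 : Euc n) ∈ interior K) (hstrict : StrictlyConvexSet K)
    {d : Euc n} (hd : d ≠ 0) :
    ∃ x₁ ∈ K, ⟪x₁, d⟫_ℝ = gauge (polarSet K) d ∧
      HasGradientAt (gauge (polarSet K)) x₁ d := by
  obtain ⟨x₁, hx₁K, hx₁val⟩ := (isGreatest_inner_polar hKcomp h0 d).1
  simp only at hx₁val
  have hub := (isGreatest_inner_polar hKcomp h0 d).2
  have hdn : (0:ℝ) < ‖d‖ := norm_pos_iff.mpr hd
  have hfr : ∀ y ∈ K, ⟪y, d⟫_ℝ = gauge (polarSet K) d → y ∈ frontier K := by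
    intro y hyK hyval
    rw [hKcomp.isClosed.frontier_eq]
    refine ⟨hyK, fun hint => ?_⟩
    obtain ⟨ε, hε, hball⟩ := Metric.mem_nhds_iff.mp (mem_interior_iff_mem_nhds.mp hint)
    have hy' : y + (ε/2) • ‖d‖⁻¹ • d ∈ K := by
      apply hball
      rw [Metric.mem_ball, dist_eq_norm, add_sub_cancel_left, norm_smul, norm_smul,
        norm_inv, norm_norm, Real.norm_eq_abs, abs_of_pos (by positivity : (0:ℝ) < ε/2),
        inv_mul_cancel₀ hdn.ne']
      simp only [mul_one]; linarith
    have hle := hub ⟨_, hy', rfl⟩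
    simp only at hle
    rw [inner_add_left, real_inner_smul_left, real_inner_smul_left,
      real_inner_self_eq_norm_sq, hyval] at hle
    have h2 : ‖d‖⁻¹ * ‖d‖^2 = ‖d‖ := by field_simp
    rw [h2] at hle
    nlinarith
  have huniq : ∀ y ∈ K, ⟪y, d⟫_ℝ = gauge (polarSet K) d → y = x₁ := by
    intro y hyK hyval
    by_contra hne
    have hmid : midpoint ℝ y x₁ ∈ interior K :=
      hstrict y (hfr y hyK hyval) x₁ (hfr x₁ hx₁K hx₁val) hne
    have hmidval : ⟪midpoint ℝ y x₁, d⟫_ℝ = gauge (polarSet K) d := by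
      rw [midpoint_eq_smul_add, invOf_eq_inv, real_inner_smul_left, inner_add_left,
        hyval, hx₁val]
      ring
    have hfr' := hfr _ (interior_subset hmid) hmidval
    rw [hKcomp.isClosed.frontier_eq] at hfr'
    exact hfr'.2 hmid
  exact ⟨x₁, hx₁K, hx₁val,
    danskin hKcomp (fun z => isGreatest_inner_polar hKcomp h0 z) hx₁K hx₁val huniq⟩

lemma inner_le_gauge_mul_gauge (hKcomp : IsCompact K) (h0 : (0 : Euc n) ∈ interior K)
    (x d : Euc n) :
    ⟪x, d⟫_ℝ ≤ gauge K x * gauge (polarSet K) d := by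
  have hKnhds : K ∈ 𝓝 (0 : Euc n) := mem_interior_iff_mem_nhds.mp h0
  set s := gauge (polarSet K) d with hs
  have hs0 : 0 ≤ s := gauge_nonneg _
  have hub := (isGreatest_inner_polar hKcomp h0 d).2
  have key : ∀ a, gauge K x < a → ⟪x, d⟫_ℝ ≤ a * s := by
    intro a ha
    obtain ⟨b, hb0, hba, hxb⟩ := exists_lt_of_gauge_lt (absorbent_nhds_zero hKnhds) ha
    obtain ⟨y, hyK, hby⟩ := hxb
    have h1 : ⟪y, d⟫_ℝ ≤ s := hub ⟨y, hyK, rfl⟩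
    rw [← hby, real_inner_smul_left]
    nlinarith
  rcases eq_or_lt_of_le hs0 with h|h
  · have := key (gauge K x + 1) (lt_add_one _)
    rw [← h] at this ⊢
    simpa using this
  · by_contra hgt
    push_neg at hgt
    set c := ⟪x, d⟫_ℝ with hc
    have h1 : gauge K x < c / s := by rwa [lt_div_iff₀ h]
    have h2 := key ((gauge K x + c/s)/2) (by linarith)
    have h3 : (gauge K x + c/s)/2 * s < c/s * s := by
      apply mul_lt_mul_of_pos_right _ h
      linarith
    rw [div_mul_cancel₀ _ h.ne'] at h3
    linarith

lemma log_ineq1 {t s : ℝ} (ht0 : 0 ≤ t) (ht1 : t < 1) (hs : 0 ≤ s) :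
    t * s + Real.log (1 - t) + t ≤ s - Real.log (1 + s) := by
  have h1 : (0:ℝ) < (1 - t) * (1 + s) := by nlinarith
  have h2 := Real.log_le_sub_one_of_pos h1
  rw [Real.log_mul (by linarith) (by linarith)] at h2
  nlinarith

lemma psi_antitone {a b : ℝ} (ha : 0 ≤ a) (hab : a ≤ b) (hb : b < 1) :
    Real.log (1 - b) + b ≤ Real.log (1 - a) + a := by
  have h1a : (0:ℝ) < 1 - a := by linarith
  have h1b : (0:ℝ) < 1 - b := by linarith
  have h2 := Real.log_le_sub_one_of_pos (div_pos h1b h1a)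
  rw [Real.log_div h1b.ne' h1a.ne'] at h2
  have h3 : (1-b)/(1-a) - 1 ≤ a - b := by
    rw [div_sub_one h1a.ne', div_le_iff₀ h1a]
    nlinarith
  linarith

lemma fstar_eq (hKcomp : IsCompact K) (hKconv : Convex ℝ K)
    (h0 : (0 : Euc n) ∈ interior K) (d : Euc n) :
    FstarK K d = gauge (polarSet K) d - Real.log (1 + gauge (polarSet K) d) := by
  set s := gauge (polarSet K) d with hs
  have hs0 : 0 ≤ s := gauge_nonneg _
  have hub : ∀ y ∈ (fun x => ⟪x, d⟫_ℝ - FK K x) '' {x | gauge K x < 1},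
      y ≤ s - Real.log (1 + s) := by
    rintro y ⟨x, hx, rfl⟩
    have ht0 : 0 ≤ gauge K x := gauge_nonneg _
    have hle := inner_le_gauge_mul_gauge hKcomp h0 x d
    have hli := log_ineq1 ht0 hx hs0
    simp only [FK]
    rw [← hs] at hle
    linarith
  obtain ⟨x₀, hx₀K, hx₀val⟩ := (isGreatest_inner_polar hKcomp h0 d).1
  simp only at hx₀val
  have hgx₀ : gauge K x₀ ≤ 1 := gauge_le_one_of_mem hx₀K
  have hgx₀0 : 0 ≤ gauge K x₀ := gauge_nonneg _
  have hcoef : 0 ≤ s/(s+1) := by positivity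
  set xstar := (s/(s+1)) • x₀ with hxstar
  have hgxstar : gauge K xstar = (s/(s+1)) * gauge K x₀ := by
    rw [hxstar, gauge_smul_of_nonneg hcoef, smul_eq_mul]
  set t' := (s/(s+1)) * gauge K x₀ with ht'
  have ht'le : t' ≤ s/(s+1) := by nlinarith
  have hfrac1 : s/(s+1) < 1 := by
    rw [div_lt_one (by linarith)]; linarith
  have ht'lt : t' < 1 := lt_of_le_of_lt ht'le hfrac1
  have ht'0 : 0 ≤ t' := by positivity
  have hmem : xstar ∈ {x : Euc n | gauge K x < 1} := by
    rw [Set.mem_setOf_eq, hgxstar]; exact ht'lt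
  have hvallb : s - Real.log (1 + s) ≤ ⟪xstar, d⟫_ℝ - FK K xstar := by
    have hinner : ⟪xstar, d⟫_ℝ = (s/(s+1)) * s := by
      rw [hxstar, real_inner_smul_left, hx₀val]
    have hpsi := psi_antitone ht'0 ht'le hfrac1
    have h1 : 1 - s/(s+1) = (s+1)⁻¹ := by field_simp; ring
    have h2 : Real.log ((s+1)⁻¹) = -Real.log (s+1) := Real.log_inv _
    rw [h1, h2] at hpsi
    have hss : (s/(s+1)) * s + s/(s+1) = s := by field_simp
    have hcomm : (1:ℝ) + s = s + 1 := by ring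
    simp only [FK]
    rw [hinner, hgxstar, hcomm]
    linarith
  have heq : ⟪xstar, d⟫_ℝ - FK K xstar = s - Real.log (1 + s) :=
    le_antisymm (hub _ ⟨xstar, hmem, rfl⟩) hvallb
  have hgreat : IsGreatest ((fun x => ⟪x, d⟫_ℝ - FK K x) '' {x | gauge K x < 1})
      (s - Real.log (1 + s)) := ⟨⟨xstar, hmem, heq⟩, fun y hy => hub y hy⟩
  rw [FstarK]
  exact hgreat.csSup_eq

lemma hasGradientAt_comp_real {g : Euc n → ℝ} {x u : Euc n} {φ : ℝ → ℝ} {c : ℝ}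
    (hφ : HasDerivAt φ c (g x)) (hg : HasGradientAt g u x) :
    HasGradientAt (fun y => φ (g y)) (c • u) x := by
  have h := hφ.comp_hasFDerivAt x hg.hasFDerivAt
  rw [HasGradientAt, HasGradientAtFilter]
  have heq : (InnerProductSpace.toDual ℝ (Euc n)) (c • u)
      = c • (InnerProductSpace.toDual ℝ (Euc n)) u := by
    ext v
    simp only [InnerProductSpace.toDual_apply_apply, ContinuousLinearMap.coe_smul',
      Pi.smul_apply, smul_eq_mul]
    rw [real_inner_smul_left]
  rw [heq]
  exact h

lemma hasDerivAt_f1 {t : ℝ} (ht : t < 1) :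
    HasDerivAt (fun r => -Real.log (1 - r) - r) (t / (1 - t)) t := by
  have h1 : HasDerivAt (fun r : ℝ => 1 - r) (-1) t := by
    simpa using (hasDerivAt_id t).const_sub 1
  have h2 : HasDerivAt (fun r => Real.log (1 - r)) (-1 / (1 - t)) t :=
    h1.log (by linarith)
  have h3 := h2.neg.sub (hasDerivAt_id' t)
  refine h3.congr_deriv ?_
  have h1t : (1:ℝ) - t ≠ 0 := by linarith
  field_simp
  ring

lemma hasDerivAt_f2 {s : ℝ} (hs : -1 < s) :
    HasDerivAt (fun r => r - Real.log (1 + r)) (s / (1 + s)) s := by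
  have h1 : HasDerivAt (fun r : ℝ => 1 + r) 1 s := by
    simpa using (hasDerivAt_id' s).const_add 1
  have h2 : HasDerivAt (fun r => Real.log (1 + r)) (1 / (1 + s)) s :=
    h1.log (by linarith)
  have h3 := (hasDerivAt_id' s).sub h2
  refine h3.congr_deriv ?_
  have h1s : (1:ℝ) + s ≠ 0 := by linarith
  field_simp
  ring

lemma hasGradientAt_zero_of_quad {g : Euc n → ℝ} {c r : ℝ} (hr : 0 < r)
    (hg0 : g 0 = 0) (hq : ∀ y : Euc n, ‖y‖ < r → |g y| ≤ c * ‖y‖ ^ 2) :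
    HasGradientAt g 0 0 := by
  rw [hasGradientAt_iff_hasFDerivAt, hasFDerivAt_iff_isLittleO,
    Asymptotics.isLittleO_iff]
  intro ε hε
  have hc1 : (0:ℝ) < max c 1 := lt_of_lt_of_le one_pos (le_max_right _ _)
  rw [Metric.eventually_nhds_iff]
  refine ⟨min r (ε / max c 1), lt_min hr (by positivity), fun y hy => ?_⟩
  rw [dist_zero_right] at hy
  have hy1 : ‖y‖ < r := lt_of_lt_of_le hy (min_le_left _ _)
  have hy2 : ‖y‖ ≤ ε / max c 1 := le_of_lt (lt_of_lt_of_le hy (min_le_right _ _))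
  have hb := hq y hy1
  have hkey : |g y| ≤ ε * ‖y‖ := by
    calc |g y| ≤ c * ‖y‖^2 := hb
      _ ≤ max c 1 * ‖y‖^2 := by
          apply mul_le_mul_of_nonneg_right (le_max_left _ _) (by positivity)
      _ = (max c 1 * ‖y‖) * ‖y‖ := by ring
      _ ≤ ε * ‖y‖ := by
          apply mul_le_mul_of_nonneg_right _ (norm_nonneg _)
          calc max c 1 * ‖y‖ ≤ max c 1 * (ε / max c 1) :=
            mul_le_mul_of_nonneg_left hy2 hc1.le
          _ = ε := by field_simp
  simpa [hg0] using hkey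

lemma FK_quad_bound {t : ℝ} (ht0 : 0 ≤ t) (ht : t ≤ 1/2) :
    0 ≤ -Real.log (1 - t) - t ∧ -Real.log (1 - t) - t ≤ 2 * t^2 := by
  have h1t : (0:ℝ) < 1 - t := by linarith
  have hlog1 : Real.log (1 - t) ≤ -t := by
    have := Real.log_le_sub_one_of_pos h1t
    linarith
  have hlog2 : -Real.log (1 - t) ≤ t / (1 - t) := by
    have h := Real.log_le_sub_one_of_pos (inv_pos.mpr h1t)
    rw [Real.log_inv] at h
    have h2 : (1-t)⁻¹ - 1 = t/(1-t) := by field_simp; ring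
    linarith
  constructor
  · linarith
  · have h3 : t/(1-t) ≤ t + 2*t^2 := by
      rw [div_le_iff₀ h1t]
      nlinarith [mul_nonneg (mul_self_nonneg t) (by linarith : (0:ℝ) ≤ 1 - 2*t)]
    linarith

lemma Fstar_quad_bound {w : ℝ} (hw : 0 ≤ w) :
    0 ≤ w - Real.log (1 + w) ∧ w - Real.log (1 + w) ≤ w^2 := by
  have h1w : (0:ℝ) < 1 + w := by linarith
  have hlog1 : Real.log (1 + w) ≤ w := by
    have := Real.log_le_sub_one_of_pos h1w
    linarith
  have hlog2 : -Real.log (1 + w) ≤ -(w/(1+w)) := by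
    have h := Real.log_le_sub_one_of_pos (inv_pos.mpr h1w)
    rw [Real.log_inv] at h
    have h2 : (1+w)⁻¹ - 1 = -(w/(1+w)) := by field_simp; ring
    linarith
  constructor
  · linarith
  · have h3 : w - w/(1+w) = w^2/(1+w) := by
      field_simp
      ring
    have h4 : w^2/(1+w) ≤ w^2 := div_le_self (sq_nonneg w) (by linarith)
    linarith

lemma hasGradientAt_FK_zero (h0 : (0 : Euc n) ∈ interior K) :
    HasGradientAt (FK K) 0 0 := by
  obtain ⟨ε, hε, hball⟩ := Metric.mem_nhds_iff.mp (mem_interior_iff_mem_nhds.mp h0)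
  have hgauge_le : ∀ y : Euc n, ε * gauge K y ≤ ‖y‖ := fun y => mul_gauge_le_norm hball
  apply hasGradientAt_zero_of_quad (r := ε/2) (c := 2/ε^2) (by positivity)
  · simp [FK, gauge_zero]
  · intro y hy
    set t := gauge K y with htd
    have ht0 : 0 ≤ t := gauge_nonneg _
    have htle : ε * t ≤ ‖y‖ := hgauge_le y
    have ht2 : t ≤ 1/2 := by
      have h5 : ε * t < ε * (1/2) := by linarith
      exact ((mul_lt_mul_iff_right₀ hε).mp h5).le
    obtain ⟨hlb, hub⟩ := FK_quad_bound ht0 ht2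
    have hFKy : FK K y = -Real.log (1 - t) - t := rfl
    rw [hFKy, abs_of_nonneg hlb]
    have hsq : ε^2 * t^2 ≤ ‖y‖^2 := by
      have h6 := mul_le_mul htle htle (mul_nonneg hε.le ht0) (norm_nonneg y)
      nlinarith [h6]
    have : 2 * t^2 ≤ 2/ε^2 * ‖y‖^2 := by
      rw [div_mul_eq_mul_div, le_div_iff₀ (by positivity : (0:ℝ) < ε^2)]
      nlinarith
    linarith

end Aux

/-- Identities for the barrier `F_K` and its Fenchel conjugate:
`∇F_K(x) = (‖x‖_K / (1 - ‖x‖_K)) ∇‖·‖_K(x)`, `F_K*(d) = ‖d‖_{K°} - ln(1 + ‖d‖_{K°})`,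
`∇F_K*(d) = (‖d‖_{K°} / (1 + ‖d‖_{K°})) ∇‖·‖_{K°}(d)`, with `F_K` differentiable on
`int K` and `F_K*` differentiable on all of `ℝⁿ`. -/
theorem barrier_identities {n : ℕ}
    (K : Set (Euc n)) (hKcomp : IsCompact K) (hKconv : Convex ℝ K)
    (h0 : (0 : Euc n) ∈ interior K)
    (hstrict : StrictlyConvexSet K) (hsmooth : SmoothSet K) :
    (∀ x : Euc n, 0 < gauge K x → gauge K x < 1 →
      gradient (FK K) x = (gauge K x / (1 - gauge K x)) • gradient (gauge K) x) ∧
    (∀ d : Euc n, FstarK K d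
        = gauge (polarSet K) d - Real.log (1 + gauge (polarSet K) d)) ∧
    (∀ d : Euc n, d ≠ 0 →
      gradient (FstarK K) d
        = (gauge (polarSet K) d / (1 + gauge (polarSet K) d)) •
            gradient (gauge (polarSet K)) d) ∧
    (∀ x ∈ interior K, DifferentiableAt ℝ (FK K) x) ∧
    (∀ d : Euc n, DifferentiableAt ℝ (FstarK K) d) := by
  have hFs : FstarK K = fun y : Euc n =>
      gauge (polarSet K) y - Real.log (1 + gauge (polarSet K) y) :=
    funext (fstar_eq hKcomp hKconv h0)
  refine ⟨?_, fstar_eq hKcomp hKconv h0, ?_, ?_, ?_⟩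
  · intro x hx0 hx1
    have hxne : x ≠ 0 := by
      intro h
      rw [h, gauge_zero] at hx0
      exact lt_irrefl 0 hx0
    obtain ⟨d₀, hd₀P, hval, hgrad⟩ :=
      exists_hasGradientAt_gauge hKcomp hKconv h0 hsmooth hxne
    have hφ := hasDerivAt_f1 hx1
    have hFK : HasGradientAt (FK K) ((gauge K x / (1 - gauge K x)) • d₀) x :=
      hasGradientAt_comp_real hφ hgrad
    rw [hFK.gradient, hgrad.gradient]
  · intro d hd
    obtain ⟨x₁, hx₁K, hval, hgrad⟩ :=
      exists_hasGradientAt_gauge_polar hKcomp h0 hstrict hd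
    have hs0 : 0 ≤ gauge (polarSet K) d := gauge_nonneg _
    have hφ := hasDerivAt_f2 (s := gauge (polarSet K) d) (by linarith)
    have hG : HasGradientAt
        (fun y : Euc n => gauge (polarSet K) y - Real.log (1 + gauge (polarSet K) y))
        ((gauge (polarSet K) d / (1 + gauge (polarSet K) d)) • x₁) d :=
      hasGradientAt_comp_real hφ hgrad
    rw [hFs, hG.gradient, hgrad.gradient]
  · intro x hxint
    have hlt : gauge K x < 1 := interior_subset_gauge_lt_one _ hxint
    rcases eq_or_ne x 0 with rfl|hxne
    · exact (hasGradientAt_FK_zero h0).hasFDerivAt.differentiableAt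
    · obtain ⟨d₀, _, _, hgrad⟩ :=
        exists_hasGradientAt_gauge hKcomp hKconv h0 hsmooth hxne
      have hφ := hasDerivAt_f1 hlt
      have hFK : HasGradientAt (FK K) ((gauge K x / (1 - gauge K x)) • d₀) x :=
        hasGradientAt_comp_real hφ hgrad
      exact hFK.hasFDerivAt.differentiableAt
  · intro d
    rw [hFs]
    rcases eq_or_ne d 0 with rfl|hdne
    · -- quadratic bound at 0
      obtain ⟨ε, hε, hball⟩ := Metric.mem_nhds_iff.mp (polar_mem_nhds hKcomp)
      have hgauge_le : ∀ y : Euc n, ε * gauge (polarSet K) y ≤ ‖y‖ :=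
        fun y => mul_gauge_le_norm hball
      have hG : HasGradientAt
          (fun y : Euc n => gauge (polarSet K) y - Real.log (1 + gauge (polarSet K) y))
          0 0 := by
        apply hasGradientAt_zero_of_quad (r := 1) (c := 1/ε^2) one_pos
        · simp [gauge_zero]
        · intro y _
          set w := gauge (polarSet K) y with hwd
          have hw0 : 0 ≤ w := gauge_nonneg _
          have hwle : ε * w ≤ ‖y‖ := hgauge_le y
          obtain ⟨hlb, hub⟩ := Fstar_quad_bound hw0
          rw [abs_of_nonneg hlb]
          have hsq : ε^2 * w^2 ≤ ‖y‖^2 := by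
            have h6 := mul_le_mul hwle hwle (mul_nonneg hε.le hw0) (norm_nonneg y)
            nlinarith [h6]
          have : w^2 ≤ 1/ε^2 * ‖y‖^2 := by
            rw [div_mul_eq_mul_div, le_div_iff₀ (by positivity : (0:ℝ) < ε^2)]
            nlinarith
          linarith
      exact hG.hasFDerivAt.differentiableAt
    · obtain ⟨x₁, _, _, hgrad⟩ :=
        exists_hasGradientAt_gauge_polar hKcomp h0 hstrict hdne
      have hs0 : 0 ≤ gauge (polarSet K) d := gauge_nonneg _
      have hφ := hasDerivAt_f2 (s := gauge (polarSet K) d) (by linarith)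
      exact (hasGradientAt_comp_real hφ hgrad).hasFDerivAt.differentiableAt
end
end

section
/- Let K ⊂ ℝⁿ be a strictly convex, smooth, compact set with 0 in its interior, and F_K(x) = −ln(1 − ‖x‖_K) − ‖x‖_K with Fenchel conjugate F_K*(d) = ‖d‖_{K°} − ln(1 + ‖d‖_{K°}). Then for all u, v ∈ ℝⁿ \ {0}, writing Θ = (‖u‖_{K°} − ‖v‖_{K°})/(1 + ‖v‖_{K°}), one has the exact identity D_{F_K*}(u, v) = Θ − ln(1 + Θ) − (‖u‖_{K°} − ‖v‖_{K°})²/(2(1 + ‖v‖_{K°})) + D_{½‖·‖²_{K°}}(u, v)/(1 + ‖v‖_{K°}). -/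
open scoped InnerProductSpace
open scoped Pointwise
open MeasureTheory
open scoped Topology

noncomputable section

section Aux
open scoped Topology

lemma polarSet_convex' {n : ℕ} (K : Set (Euc n)) : Convex ℝ (polarSet K) := by
  intro d1 h1 d2 h2 p q hp hq hpq x hx
  have e1 := h1 x hx
  have e2 := h2 x hx
  simp only [polarSet, Set.mem_setOf_eq] at *
  have e1 := h1 x hx
  have e2 := h2 x hx
  simp only [inner_add_left, real_inner_smul_left]
  nlinarith

lemma polarSet_mem_nhds' {n : ℕ} {K : Set (Euc n)} (hKcomp : IsCompact K) :
    polarSet K ∈ 𝓝 (0 : Euc n) := by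
  obtain ⟨R, hR0, hR⟩ : ∃ R > 0, K ⊆ Metric.closedBall 0 R := by
    obtain ⟨R, hR⟩ := hKcomp.isBounded.subset_closedBall 0
    exact ⟨max R 1, lt_of_lt_of_le one_pos (le_max_right R 1),
      hR.trans (Metric.closedBall_subset_closedBall (le_max_left _ _))⟩
  refine Filter.mem_of_superset (Metric.ball_mem_nhds 0 (by positivity : (0:ℝ) < R⁻¹)) ?_
  intro d hd x hx
  have h1 : ‖d‖ < R⁻¹ := by simpa using hd
  have h2 : ‖x‖ ≤ R := by simpa using hR hx
  have hinv : R⁻¹ * R = 1 := inv_mul_cancel₀ (ne_of_gt hR0)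
  calc ⟪d, x⟫_ℝ ≤ ‖d‖ * ‖x‖ := real_inner_le_norm d x
    _ ≤ 1 := by nlinarith [norm_nonneg d, norm_nonneg x]

lemma polarSet_isBounded' {n : ℕ} {K : Set (Euc n)} (h0 : (0 : Euc n) ∈ interior K) :
    Bornology.IsBounded (polarSet K) := by
  obtain ⟨r, hr0, hr⟩ := Metric.mem_nhds_iff.1 (mem_interior_iff_mem_nhds.1 h0)
  rw [isBounded_iff_forall_norm_le]
  refine ⟨2 / r, fun d hd => ?_⟩
  rcases eq_or_ne d 0 with rfl | hd0
  · simp; positivity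
  · have hnd : 0 < ‖d‖ := norm_pos_iff.2 hd0
    have hxK : (r / (2 * ‖d‖)) • d ∈ K := by
      apply hr
      rw [Metric.mem_ball, dist_zero_right, norm_smul, Real.norm_eq_abs,
        abs_of_pos (by positivity)]
      have e : ‖d‖ * (r / (2 * ‖d‖)) = r / 2 := by field_simp
      rw [mul_comm, e]
      linarith
    have hle := hd _ hxK
    rw [real_inner_smul_right, real_inner_self_eq_norm_sq] at hle
    have e : r / (2 * ‖d‖) * ‖d‖ ^ 2 = r * ‖d‖ / 2 := by field_simp
    rw [e] at hle
    rw [le_div_iff₀ hr0]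
    linarith

lemma comp_diffAt_iff' {n : ℕ} {g : Euc n → ℝ} {φ : ℝ → ℝ} {c : ℝ} {v : Euc n}
    (hgc : ContinuousAt g v) (hφ : HasStrictDerivAt φ c (g v)) (hc : c ≠ 0) :
    DifferentiableAt ℝ (fun x => φ (g x)) v ↔ DifferentiableAt ℝ g v := by
  constructor
  · intro hF
    set χ := HasStrictDerivAt.localInverse φ c (g v) hφ hc with hχdef
    have hχ : HasStrictDerivAt χ c⁻¹ (φ (g v)) := hφ.to_localInverse hc
    have hleft : ∀ᶠ t in 𝓝 (g v), χ (φ t) = t :=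
      (hφ.hasStrictFDerivAt_equiv hc).eventually_left_inverse
    have hEv : ∀ᶠ x in 𝓝 v, χ (φ (g x)) = g x := hgc.eventually hleft
    have hcomp : DifferentiableAt ℝ (fun x => χ (φ (g x))) v :=
      hχ.hasDerivAt.differentiableAt.comp v hF
    exact hcomp.congr_of_eventuallyEq (hEv.mono fun x hx => hx.symm)
  · intro hg
    exact (hφ.hasDerivAt.comp_hasFDerivAt v hg.hasFDerivAt).differentiableAt

lemma gradient_comp_eq' {n : ℕ} {g : Euc n → ℝ} {φ : ℝ → ℝ} {c : ℝ} {v : Euc n}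
    (hg : DifferentiableAt ℝ g v) (hφ : HasDerivAt φ c (g v)) :
    gradient (fun x => φ (g x)) v = c • gradient g v := by
  have h : HasFDerivAt (fun x => φ (g x)) (c • fderiv ℝ g v) v :=
    hφ.comp_hasFDerivAt v hg.hasFDerivAt
  unfold gradient
  rw [h.fderiv, _root_.map_smul]

lemma hasStrictDerivAt_phi' {a : ℝ} (ha : 0 ≤ a) :
    HasStrictDerivAt (fun t : ℝ => t - Real.log (1 + t)) (a / (1 + a)) a := by
  have h1 : HasStrictDerivAt (fun t : ℝ => 1 + t) 1 a := by
    simpa using (hasStrictDerivAt_id a).const_add 1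
  have h1a : (0 : ℝ) < 1 + a := by linarith
  have h2 : HasStrictDerivAt (fun t : ℝ => Real.log (1 + t)) ((1 + a)⁻¹ * 1) a :=
    (Real.hasStrictDerivAt_log (ne_of_gt h1a)).comp a h1
  have h3 := (hasStrictDerivAt_id a).sub h2
  exact h3.congr_deriv (by field_simp; ring)

lemma hasStrictDerivAt_psi' (a : ℝ) :
    HasStrictDerivAt (fun t : ℝ => t ^ 2 / 2) a a := by
  have := (hasStrictDerivAt_pow 2 a).div_const 2
  exact this.congr_deriv (by ring)

end Aux

/-- Exact identity for the Bregman divergence of the conjugate barrier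
`F_K*(d) = ‖d‖_{K°} - ln(1 + ‖d‖_{K°})`. -/
theorem bregman_conjugate_identity {n : ℕ}
    (K : Set (Euc n)) (hKcomp : IsCompact K) (hKconv : Convex ℝ K)
    (h0 : (0 : Euc n) ∈ interior K)
    (hstrict : StrictlyConvexSet K) (hsmooth : SmoothSet K)
    (u v : Euc n) (hu : u ≠ 0) (hv : v ≠ 0)
    (Θ : ℝ)
    (hΘ : Θ = (gauge (polarSet K) u - gauge (polarSet K) v)
                / (1 + gauge (polarSet K) v)) :
    breg (fun d => gauge (polarSet K) d - Real.log (1 + gauge (polarSet K) d)) u v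
      = Θ - Real.log (1 + Θ)
        - (gauge (polarSet K) u - gauge (polarSet K) v) ^ 2
            / (2 * (1 + gauge (polarSet K) v))
        + breg (fun d => gauge (polarSet K) d ^ 2 / 2) u v
            / (1 + gauge (polarSet K) v) := by
  have hSnhds : polarSet K ∈ 𝓝 (0 : Euc n) := polarSet_mem_nhds' hKcomp
  have hSconv : Convex ℝ (polarSet K) := polarSet_convex' K
  have hSbdd : Bornology.IsBounded (polarSet K) := polarSet_isBounded' h0
  have habs : Absorbent ℝ (polarSet K) := absorbent_nhds_zero hSnhds
  have hvnb : Bornology.IsVonNBounded ℝ (polarSet K) :=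
    (NormedSpace.isVonNBounded_iff ℝ).2 hSbdd
  set g : Euc n → ℝ := gauge (polarSet K) with hgdef
  have ha : 0 < g v := (gauge_pos habs hvnb).2 hv
  have hb : 0 ≤ g u := gauge_nonneg u
  have hgc : ContinuousAt g v := continuousAt_gauge hSconv hSnhds
  set a := g v with hadef
  set b := g u with hbdef
  have h1a : (0:ℝ) < 1 + a := by linarith
  have h1b : (0:ℝ) < 1 + b := by linarith
  have hφ : HasStrictDerivAt (fun t : ℝ => t - Real.log (1 + t)) (a / (1 + a)) a :=
    hasStrictDerivAt_phi' (le_of_lt ha)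
  have hψ : HasStrictDerivAt (fun t : ℝ => t ^ 2 / 2) a a := hasStrictDerivAt_psi' a
  have key : ⟪gradient (fun d => g d - Real.log (1 + g d)) v, u - v⟫_ℝ
      = ⟪gradient (fun d => g d ^ 2 / 2) v, u - v⟫_ℝ / (1 + a) := by
    by_cases hdg : DifferentiableAt ℝ g v
    · rw [gradient_comp_eq' hdg hφ.hasDerivAt, gradient_comp_eq' hdg hψ.hasDerivAt,
        real_inner_smul_left, real_inner_smul_left]
      field_simp
    · have hF : ¬ DifferentiableAt ℝ (fun d => g d - Real.log (1 + g d)) v := fun h =>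
        hdg ((comp_diffAt_iff' hgc hφ (ne_of_gt (div_pos ha h1a))).1 h)
      have hG : ¬ DifferentiableAt ℝ (fun d => g d ^ 2 / 2) v := fun h =>
        hdg ((comp_diffAt_iff' hgc hψ (ne_of_gt ha)).1 h)
      rw [gradient_eq_zero_of_not_differentiableAt hF,
          gradient_eq_zero_of_not_differentiableAt hG]
      simp
  have hlogΘ : Real.log (1 + Θ) = Real.log (1 + b) - Real.log (1 + a) := by
    have e : 1 + Θ = (1 + b) / (1 + a) := by
      rw [hΘ]; field_simp; ring
    rw [e, Real.log_div (ne_of_gt h1b) (ne_of_gt h1a)]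
  simp only [breg]
  rw [key, hlogΘ, hΘ]
  field_simp
  ring
end
end
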